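/- Let H ↪ H₀ be a compact dense injective embedding of Hilbert spaces, F[f] = ‖f‖²_H − ‖f‖²_{H₀}, and Ω = { f ∈ H : ‖f‖_{H₀} = 1 }. If Ω is nonempty, then F attains its minimum on Ω: there exists f₀ ∈ Ω with F[f₀] ≤ F[f] for all f ∈ Ω. Consequently, with λ = F[f₀] ≥ 0, one has ‖f‖²_H ≥ (λ + 1) ‖f‖²_{H₀} for all f ∈ H. -/

import Mathlib

open scoped ComplexConjugate
open RCLike Metric

/-- For a compact dense injective embedding `T : H ↪ H₀` of Hilbert spaces with
`‖Tf‖ ≤ ‖f‖`, the functional `F[f] = ‖f‖_H² − ‖f‖_{H₀}²` attains its minimum on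
`Ω = {f : ‖f‖_{H₀} = 1}` (if nonempty), and with `λ = F[f₀] ≥ 0` one has
`‖f‖_H² ≥ (λ+1)‖f‖_{H₀}²` for all `f ∈ H`. -/
theorem stmt_19 {H H₀ : Type*}
    [NormedAddCommGroup H] [InnerProductSpace ℂ H] [CompleteSpace H]
    [NormedAddCommGroup H₀] [InnerProductSpace ℂ H₀] [CompleteSpace H₀]
    (T : H →L[ℂ] H₀) (hTinj : Function.Injective T) (hTcomp : IsCompactOperator T)
    (hTdense : DenseRange T) (hTnorm : ∀ f : H, ‖T f‖ ≤ ‖f‖)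
    (F : H → ℝ) (hF : ∀ f : H, F f = ‖f‖ ^ 2 - ‖T f‖ ^ 2)
    (hΩ : ∃ f : H, ‖T f‖ = 1) :
    ∃ f₀ : H, ‖T f₀‖ = 1 ∧ (∀ f : H, ‖T f‖ = 1 → F f₀ ≤ F f) ∧ 0 ≤ F f₀ ∧
      ∀ f : H, (F f₀ + 1) * ‖T f‖ ^ 2 ≤ ‖f‖ ^ 2 := by
  classical
  set S : Set ℝ := {x | ∃ f : H, ‖f‖ = 1 ∧ ‖T f‖ ^ 2 = x} with hSdef
  obtain ⟨w, hw⟩ := hΩ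
  have hw0 : w ≠ 0 := by
    intro h; rw [h] at hw; simp at hw
  have hwn : (0:ℝ) < ‖w‖ := norm_pos_iff.mpr hw0
  -- normalized version of `w`
  have hnormalize : ∀ f : H, f ≠ 0 → ‖(‖f‖⁻¹ : ℂ) • f‖ = 1 := by
    intro f hf
    have : (0:ℝ) < ‖f‖ := norm_pos_iff.mpr hf
    rw [norm_smul]
    simp [abs_of_pos this, inv_mul_cancel₀ this.ne']
  have hSne : S.Nonempty := by
    refine ⟨‖T ((‖w‖⁻¹ : ℂ) • w)‖ ^ 2, ⟨(‖w‖⁻¹ : ℂ) • w, hnormalize w hw0, rfl⟩⟩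
  have hSbdd : BddAbove S := by
    refine ⟨1, ?_⟩
    rintro x ⟨f, hf1, rfl⟩
    calc ‖T f‖ ^ 2 ≤ ‖f‖ ^ 2 := by
          apply pow_le_pow_left₀ (norm_nonneg _) (hTnorm f)
      _ = 1 := by rw [hf1]; norm_num
  set μ : ℝ := sSup S with hμdef
  -- μ is positive
  have hμpos : 0 < μ := by
    have hmem : ‖T ((‖w‖⁻¹ : ℂ) • w)‖ ^ 2 ∈ S := ⟨(‖w‖⁻¹ : ℂ) • w, hnormalize w hw0, rfl⟩
    have h1 : ‖T ((‖w‖⁻¹ : ℂ) • w)‖ ^ 2 ≤ μ := le_csSup hSbdd hmem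
    have h2 : (0:ℝ) < ‖T ((‖w‖⁻¹ : ℂ) • w)‖ ^ 2 := by
      rw [map_smul, norm_smul, hw, mul_one]
      have hne : ((‖w‖ : ℂ))⁻¹ ≠ 0 := by simp [hwn.ne']
      exact pow_pos (norm_pos_iff.mpr hne) 2
    linarith
  -- μ ≤ 1
  have hμle1 : μ ≤ 1 := by
    apply csSup_le hSne
    rintro x ⟨f, hf1, rfl⟩
    calc ‖T f‖ ^ 2 ≤ ‖f‖ ^ 2 := pow_le_pow_left₀ (norm_nonneg _) (hTnorm f) 2
      _ = 1 := by rw [hf1]; norm_num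
  -- the key inequality  ‖Tf‖² ≤ μ ‖f‖²
  have hkey : ∀ f : H, ‖T f‖ ^ 2 ≤ μ * ‖f‖ ^ 2 := by
    intro f
    rcases eq_or_ne f 0 with rfl | hf
    · simp
    · have hfn : (0:ℝ) < ‖f‖ := norm_pos_iff.mpr hf
      have hmem : ‖T ((‖f‖⁻¹ : ℂ) • f)‖ ^ 2 ∈ S := ⟨_, hnormalize f hf, rfl⟩
      have h1 : ‖T ((‖f‖⁻¹ : ℂ) • f)‖ ^ 2 ≤ μ := le_csSup hSbdd hmem
      rw [map_smul, norm_smul] at h1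
      have : (‖f‖⁻¹) ^ 2 * ‖T f‖ ^ 2 ≤ μ := by
        calc (‖f‖⁻¹) ^ 2 * ‖T f‖ ^ 2 = (‖(‖f‖⁻¹ : ℂ)‖ * ‖T f‖) ^ 2 := by
              rw [mul_pow]
              congr 1
              simp [abs_of_pos hfn]
          _ ≤ μ := h1
      have h3 := mul_le_mul_of_nonneg_right this (sq_nonneg ‖f‖)
      have h4 : ‖f‖⁻¹ ^ 2 * ‖T f‖ ^ 2 * ‖f‖ ^ 2 = ‖T f‖ ^ 2 := by
        field_simp
      linarith
  -- a maximizing sequence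
  obtain ⟨u, -, hutend, humem⟩ := exists_seq_tendsto_sSup hSne hSbdd
  choose g hg1 hg2 using humem
  -- the operator A = T† T
  set A : H →L[ℂ] H := (ContinuousLinearMap.adjoint T).comp T with hAdef
  have hA_apply : ∀ f : H, A f = ContinuousLinearMap.adjoint T (T f) := fun f => rfl
  have hAinner : ∀ f : H, RCLike.re (inner ℂ (A f) f : ℂ) = ‖T f‖ ^ 2 := by
    intro f
    rw [← ContinuousLinearMap.apply_norm_sq_eq_inner_adjoint_left]
  -- bound ‖A f‖ ≤ μ ‖f‖
  have hTf_le : ∀ f : H, ‖T f‖ ≤ Real.sqrt μ * ‖f‖ := by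
    intro f
    have := hkey f
    have h := Real.sqrt_le_sqrt this
    rwa [Real.sqrt_sq (norm_nonneg _), Real.sqrt_mul hμpos.le, Real.sqrt_sq (norm_nonneg _)] at h
  have hAbound : ∀ f : H, ‖A f‖ ≤ μ * ‖f‖ := by
    intro f
    have h1 : ‖A f‖ ^ 2 = RCLike.re (inner ℂ (T f) (T (A f)) : ℂ) := by
      have : (inner ℂ (A f) (A f) : ℂ) = inner ℂ (T f) (T (A f)) := by
        rw [hA_apply, ContinuousLinearMap.adjoint_inner_left]
      rw [← inner_self_eq_norm_sq (𝕜 := ℂ) (A f), this]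
    have h2 : RCLike.re (inner ℂ (T f) (T (A f)) : ℂ) ≤ ‖T f‖ * ‖T (A f)‖ := by
      calc RCLike.re (inner ℂ (T f) (T (A f)) : ℂ) ≤ ‖(inner ℂ (T f) (T (A f)) : ℂ)‖ :=
            RCLike.re_le_norm _
        _ ≤ ‖T f‖ * ‖T (A f)‖ := norm_inner_le_norm _ _
    have h3 : ‖T f‖ * ‖T (A f)‖ ≤ (Real.sqrt μ * ‖f‖) * (Real.sqrt μ * ‖A f‖) :=
      mul_le_mul (hTf_le f) (hTf_le (A f)) (norm_nonneg _)
        (by positivity)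
    have h4 : ‖A f‖ ^ 2 ≤ μ * ‖f‖ * ‖A f‖ := by
      have : (Real.sqrt μ * ‖f‖) * (Real.sqrt μ * ‖A f‖) = μ * ‖f‖ * ‖A f‖ := by
        rw [show (Real.sqrt μ * ‖f‖) * (Real.sqrt μ * ‖A f‖)
            = (Real.sqrt μ * Real.sqrt μ) * ‖f‖ * ‖A f‖ by ring,
          Real.mul_self_sqrt hμpos.le]
      rw [h1]; rw [this] at h3; exact le_trans h2 h3
    rcases eq_or_lt_of_le (norm_nonneg (A f)) with hAf | hAf
    · rw [← hAf]; positivity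
    · nlinarith [h4, hAf]
  -- the defect sequence tends to zero
  have hdefect : Filter.Tendsto (fun n => A (g n) - (μ:ℂ) • g n) Filter.atTop (nhds 0) := by
    rw [tendsto_zero_iff_norm_tendsto_zero]
    have hsq : ∀ n, ‖A (g n) - (μ:ℂ) • g n‖ ^ 2 ≤ 2 * μ ^ 2 - 2 * μ * u n := by
      intro n
      have hexp := norm_sub_sq (𝕜 := ℂ) (A (g n)) ((μ:ℂ) • g n)
      have hre : RCLike.re (inner ℂ (A (g n)) ((μ:ℂ) • g n) : ℂ) = μ * u n := by
        rw [inner_smul_right]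
        have : RCLike.re ((μ:ℂ) * inner ℂ (A (g n)) (g n)) =
            μ * RCLike.re (inner ℂ (A (g n)) (g n) : ℂ) := by
          rw [RCLike.mul_re]
          simp
        rw [this, hAinner, hg2]
      have hn1 : ‖A (g n)‖ ^ 2 ≤ μ ^ 2 := by
        have := hAbound (g n)
        rw [hg1, mul_one] at this
        exact pow_le_pow_left₀ (norm_nonneg _) this 2
      have hn2 : ‖(μ:ℂ) • g n‖ ^ 2 = μ ^ 2 := by
        rw [norm_smul, hg1, mul_one, Complex.norm_real, Real.norm_eq_abs,
          abs_of_pos hμpos]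
      rw [hexp, hre, hn2]
      linarith
    have hbound_tend : Filter.Tendsto (fun n => 2 * μ ^ 2 - 2 * μ * u n)
        Filter.atTop (nhds 0) := by
      have h0 : Filter.Tendsto (fun n => 2 * μ ^ 2 - 2 * μ * u n) Filter.atTop
          (nhds (2 * μ ^ 2 - 2 * μ * μ)) := by
        apply Filter.Tendsto.sub tendsto_const_nhds
        exact (hutend.const_mul _)
      have h1 : 2 * μ ^ 2 - 2 * μ * μ = 0 := by ring
      rwa [h1] at h0
    have hns : Filter.Tendsto (fun n => ‖A (g n) - (μ:ℂ) • g n‖ ^ 2)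
        Filter.atTop (nhds 0) := by
      apply squeeze_zero (fun n => by positivity) hsq hbound_tend
    have hsqrt : Filter.Tendsto (fun n => Real.sqrt (‖A (g n) - (μ:ℂ) • g n‖ ^ 2))
        Filter.atTop (nhds (Real.sqrt 0)) :=
      (Real.continuous_sqrt.tendsto 0).comp hns
    rw [Real.sqrt_zero] at hsqrt
    refine hsqrt.congr fun n => ?_
    rw [Real.sqrt_sq (norm_nonneg _)]
  -- extract a convergent subsequence of `T (g n)` using compactness
  obtain ⟨K, hK, hKsub⟩ := hTcomp.image_closedBall_subset_compact (𝕜₁ := ℂ) 1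
  have hmemK : ∀ n, T (g n) ∈ K := by
    intro n
    apply hKsub
    exact ⟨g n, by simp [Metric.mem_closedBall, hg1], rfl⟩
  obtain ⟨y, -, φ, hφ, hconv⟩ := hK.tendsto_subseq hmemK
  -- so `A (g (φ n)) → T† y` and hence `g (φ n) → e`
  have hAconv : Filter.Tendsto (fun n => A (g (φ n))) Filter.atTop
      (nhds (ContinuousLinearMap.adjoint T y)) :=
    ((ContinuousLinearMap.adjoint T).continuous.tendsto y).comp hconv
  have hdefect' : Filter.Tendsto (fun n => A (g (φ n)) - (μ:ℂ) • g (φ n))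
      Filter.atTop (nhds 0) := hdefect.comp hφ.tendsto_atTop
  have hμg : Filter.Tendsto (fun n => (μ:ℂ) • g (φ n)) Filter.atTop
      (nhds (ContinuousLinearMap.adjoint T y)) := by
    have := hAconv.sub hdefect'
    simpa using this
  set e : H := ((μ:ℂ))⁻¹ • ContinuousLinearMap.adjoint T y with hedef
  have hμne : ((μ:ℂ)) ≠ 0 := by
    simp only [ne_eq, Complex.ofReal_eq_zero]
    exact hμpos.ne'
  have hgconv : Filter.Tendsto (fun n => g (φ n)) Filter.atTop (nhds e) := by
    have := hμg.const_smul (((μ:ℂ))⁻¹)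
    simp only [smul_smul, inv_mul_cancel₀ hμne, one_smul] at this
    exact this
  -- properties of e
  have he_norm : ‖e‖ = 1 := by
    have h1 : Filter.Tendsto (fun n => ‖g (φ n)‖) Filter.atTop (nhds ‖e‖) :=
      (continuous_norm.tendsto e).comp hgconv
    have h2 : (fun n => ‖g (φ n)‖) = fun _ => (1:ℝ) := funext fun n => hg1 (φ n)
    rw [h2] at h1
    exact (tendsto_const_nhds_iff.mp h1).symm
  have he_T : ‖T e‖ ^ 2 = μ := by
    have h1 : Filter.Tendsto (fun n => ‖T (g (φ n))‖ ^ 2) Filter.atTop (nhds (‖T e‖ ^ 2)) := by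
      have : Continuous fun f : H => ‖T f‖ ^ 2 := (T.continuous.norm).pow 2
      exact (this.tendsto e).comp hgconv
    have h2 : Filter.Tendsto (fun n => ‖T (g (φ n))‖ ^ 2) Filter.atTop (nhds μ) := by
      have : (fun n => ‖T (g (φ n))‖ ^ 2) = fun n => u (φ n) := funext fun n => hg2 (φ n)
      rw [this]
      exact hutend.comp hφ.tendsto_atTop
    exact tendsto_nhds_unique h1 h2
  -- define f₀
  have hsqμ : (0:ℝ) < Real.sqrt μ := Real.sqrt_pos.mpr hμpos
  set f₀ : H := ((Real.sqrt μ)⁻¹ : ℂ) • e with hf₀def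
  have hTe_norm : ‖T e‖ = Real.sqrt μ := by
    rw [← he_T, Real.sqrt_sq (norm_nonneg _)]
  have hf₀Ω : ‖T f₀‖ = 1 := by
    rw [hf₀def, map_smul, norm_smul, hTe_norm]
    simp [abs_of_pos hsqμ, inv_mul_cancel₀ hsqμ.ne']
  have hf₀norm : ‖f₀‖ ^ 2 = μ⁻¹ := by
    rw [hf₀def, norm_smul, mul_pow, he_norm]
    have : ‖((Real.sqrt μ)⁻¹ : ℂ)‖ = (Real.sqrt μ)⁻¹ := by
      simp [abs_of_pos hsqμ]
    rw [this]
    rw [one_pow, mul_one, ← Real.sqrt_inv, Real.sq_sqrt (by positivity)]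
  have hFf₀ : F f₀ = μ⁻¹ - 1 := by
    rw [hF, hf₀norm, hf₀Ω, one_pow]
  refine ⟨f₀, hf₀Ω, ?_, ?_, ?_⟩
  · intro f hf
    rw [hFf₀, hF, hf, one_pow]
    have := hkey f
    rw [hf, one_pow] at this
    nlinarith [mul_inv_cancel₀ hμpos.ne', inv_pos.mpr hμpos]
  · rw [hFf₀]
    nlinarith [mul_inv_cancel₀ hμpos.ne', hμle1, inv_pos.mpr hμpos]
  · intro f
    rw [hFf₀]
    nlinarith [hkey f, mul_inv_cancel₀ hμpos.ne', inv_pos.mpr hμpos, sq_nonneg ‖T f‖]
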